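/- Every linear threshold function f : {-1,1}^n → {-1,1} satisfies I[f] ≤ √n. -/

import Mathlib

open Finset
open scoped Classical

noncomputable section

/-- The Boolean cube `{-1,1}^V` as a finset of functions `V → ℤ`. -/
def cube (V : Type*) [Fintype V] [DecidableEq V] : Finset (V → ℤ) :=
  Fintype.piFinset fun _ => ({-1, 1} : Finset ℤ)

/-- Negate the `i`-th coordinate. -/
def flipAt {V : Type*} [DecidableEq V] (x : V → ℤ) (i : V) : V → ℤ :=
  Function.update x i (-(x i))

/-- Influence of coordinate `i` on `f`: the probability over a uniform point of the cube
that flipping coordinate `i` changes the value of `f`. -/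
def coordInf {V : Type*} [Fintype V] [DecidableEq V] {α : Type*} (f : (V → ℤ) → α) (i : V) : ℝ :=
  (∑ x ∈ cube V, if f x ≠ f (flipAt x i) then (1 : ℝ) else 0) / (cube V).card

/-- Total influence of `f`. -/
def totalInf {V : Type*} [Fintype V] [DecidableEq V] {α : Type*} (f : (V → ℤ) → α) : ℝ :=
  ∑ i : V, coordInf f i

/-- Sign function, with `sgn 0 = 0`. -/
def sgn (t : ℝ) : ℤ := if 0 < t then 1 else if t < 0 then -1 else 0

/-- A quadratic multilinear polynomial `∑_{i<j} a_{ij} x_i x_j + ∑_i b_i x_i + c`. -/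
def quadPoly {V : Type*} [Fintype V] [LinearOrder V] (a : V → V → ℝ) (b : V → ℝ) (c : ℝ)
    (x : V → ℤ) : ℝ :=
  (∑ i : V, ∑ j : V, if i < j then a i j * x i * x j else 0) + (∑ i : V, b i * x i) + c

/-- `f` is a QTF supported on the graph `G`: it has a quadratic representation whose
cross terms only involve edges of `G`, and whose polynomial is nonvanishing on the cube. -/
def IsQTFSupportedOn {V : Type*} [Fintype V] [LinearOrder V] (G : SimpleGraph V)
    (f : (V → ℤ) → ℤ) : Prop :=
  ∃ a b c, (∀ i j : V, i < j → a i j ≠ 0 → G.Adj i j) ∧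
    (∀ x ∈ cube V, quadPoly a b c x ≠ 0) ∧
    (∀ x ∈ cube V, f x = sgn (quadPoly a b c x))

lemma mem_cube {V : Type*} [Fintype V] [DecidableEq V] {x : V → ℤ} :
    x ∈ cube V ↔ ∀ i, x i = -1 ∨ x i = 1 := by
  simp [cube, Fintype.mem_piFinset]

lemma flip_involutive {V : Type*} [DecidableEq V] (i : V) :
    Function.Involutive (fun x : V → ℤ => flipAt x i) := by
  intro x
  funext j
  by_cases h : j = i
  · subst h; simp [flipAt]
  · simp [flipAt, Function.update_of_ne h]

lemma flip_mem {V : Type*} [Fintype V] [DecidableEq V] {x : V → ℤ} (hx : x ∈ cube V) (i : V) :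
    flipAt x i ∈ cube V := by
  rw [mem_cube] at hx ⊢
  intro j
  by_cases h : j = i
  · subst h
    rcases hx j with h1 | h1 <;> simp [flipAt, h1]
  · simpa [flipAt, Function.update_of_ne h] using hx j

lemma flipAt_flipAt {V : Type*} [DecidableEq V] (x : V → ℤ) (i : V) :
    flipAt (flipAt x i) i = x := flip_involutive i x

lemma sum_flip {V : Type*} [Fintype V] [DecidableEq V] (i : V) (g : (V → ℤ) → ℝ) :
    ∑ x ∈ cube V, g (flipAt x i) = ∑ x ∈ cube V, g x := by
  refine Finset.sum_equiv ((flip_involutive (V := V) i).toPerm _) ?_ ?_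
  · intro x
    simp only [Function.Involutive.coe_toPerm]
    constructor
    · intro hx; exact flip_mem hx i
    · intro hx
      have h2 := flip_mem hx i
      rwa [flipAt_flipAt] at h2
  · intro x _
    simp only [Function.Involutive.coe_toPerm]

lemma flip_apply_self {V : Type*} [DecidableEq V] (x : V → ℤ) (i : V) :
    flipAt x i i = -(x i) := by simp [flipAt]

lemma flip_apply_ne {V : Type*} [DecidableEq V] (x : V → ℤ) {i j : V} (h : j ≠ i) :
    flipAt x i j = x j := by simp [flipAt, Function.update_of_ne h]

lemma lin_flip {n : ℕ} (a₀ : ℝ) (a : Fin n → ℝ) (x : Fin n → ℤ) (i : Fin n) :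
    a₀ + ∑ j, a j * ((flipAt x i) j : ℝ)
      = (a₀ + ∑ j, a j * (x j : ℝ)) - 2 * a i * (x i : ℝ) := by
  have h : ∀ j : Fin n, a j * ((flipAt x i) j : ℝ)
      = a j * (x j : ℝ) - (if j = i then 2 * a i * (x i : ℝ) else 0) := by
    intro j
    by_cases h : j = i
    · subst h
      rw [flip_apply_self]
      push_cast
      simp
      ring
    · rw [flip_apply_ne x h, if_neg h, sub_zero]
  rw [Finset.sum_congr rfl fun j _ => h j, Finset.sum_sub_distrib,
    Finset.sum_ite_eq' Finset.univ i fun _ => 2 * a i * (x i : ℝ)]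
  simp
  ring

lemma sgn_of_pos {t : ℝ} (h : 0 < t) : sgn t = 1 := if_pos h

lemma sgn_of_neg {t : ℝ} (h : t < 0) : sgn t = -1 := by
  unfold sgn
  rw [if_neg (by linarith), if_pos h]

/-- Every linear threshold function on `n` variables has total influence at most `√n`. -/
theorem ltf_influence_le_sqrt {n : ℕ} (a₀ : ℝ) (a : Fin n → ℝ)
    (hnz : ∀ x ∈ cube (Fin n), a₀ + ∑ i, a i * x i ≠ 0)
    (f : (Fin n → ℤ) → ℤ)
    (hf : ∀ x ∈ cube (Fin n), f x = sgn (a₀ + ∑ i, a i * x i)) :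
    totalInf f ≤ Real.sqrt n := by
  classical
  set S := cube (Fin n) with hS
  set s : Fin n → ℝ := fun i => if 0 < a i then 1 else if a i < 0 then -1 else 0 with hs
  set L : (Fin n → ℤ) → ℝ := fun x => a₀ + ∑ i, a i * (x i : ℝ) with hL
  set T : (Fin n → ℤ) → ℝ := fun x => ∑ i, s i * (x i : ℝ) with hT
  have cardS_pos : (0 : ℝ) < S.card := by
    have : (fun _ : Fin n => (1 : ℤ)) ∈ S := by
      rw [mem_cube]; intro i; right; rfl
    exact_mod_cast Finset.card_pos.mpr ⟨_, this⟩
  -- pointwise key identity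
  have key : ∀ x ∈ S, ∀ i : Fin n,
      (if f x ≠ f (flipAt x i) then (1 : ℝ) else 0)
        = (1 / 2) * (s i * (x i : ℝ) * ((f x : ℝ) - (f (flipAt x i) : ℝ))) := by
    intro x hx i
    have hx' : flipAt x i ∈ S := flip_mem hx i
    by_cases hne : f x = f (flipAt x i)
    · rw [if_neg (by simpa using hne), hne]; ring
    · rw [if_pos hne]
      have hLf : L (flipAt x i) = L x - 2 * a i * (x i : ℝ) := lin_flip a₀ a x i
      have hxv : (x i : ℝ) = -1 ∨ (x i : ℝ) = 1 := by
        rcases mem_cube.mp hx i with h | h <;> [left; right] <;> rw [h] <;> push_cast <;> ring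
      have hu : L x ≠ 0 := hnz x hx
      have hv : L (flipAt x i) ≠ 0 := hnz _ hx'
      have hfx : f x = sgn (L x) := hf x hx
      have hfy : f (flipAt x i) = sgn (L (flipAt x i)) := hf _ hx'
      have hop : (0 < L x ∧ L (flipAt x i) < 0) ∨ (L x < 0 ∧ 0 < L (flipAt x i)) := by
        rcases hu.lt_or_gt with h1 | h1 <;> rcases hv.lt_or_gt with h2 | h2
        · exact absurd (by rw [hfx, hfy, sgn_of_neg h1, sgn_of_neg h2]) hne
        · exact Or.inr ⟨h1, h2⟩
        · exact Or.inl ⟨h1, h2⟩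
        · exact absurd (by rw [hfx, hfy, sgn_of_pos h1, sgn_of_pos h2]) hne
      rcases hop with ⟨h1, h2⟩ | ⟨h1, h2⟩
      · have haxi : 0 < a i * (x i : ℝ) := by nlinarith [hLf]
        have hsx : s i * (x i : ℝ) = 1 := by
          rcases hxv with h | h <;> rw [h] <;> simp only [hs] <;> split_ifs with p q <;> nlinarith
        rw [hfx, hfy, sgn_of_pos h1, sgn_of_neg h2]
        push_cast
        rw [hsx]; ring
      · have haxi : a i * (x i : ℝ) < 0 := by nlinarith [hLf]
        have hsx : s i * (x i : ℝ) = -1 := by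
          rcases hxv with h | h <;> rw [h] <;> simp only [hs] <;> split_ifs with p q <;> nlinarith
        rw [hfx, hfy, sgn_of_neg h1, sgn_of_pos h2]
        push_cast
        rw [hsx]; ring
  -- coordinate influence formula
  have coord : ∀ i : Fin n,
      coordInf f i = (∑ x ∈ S, s i * (x i : ℝ) * (f x : ℝ)) / S.card := by
    intro i
    unfold coordInf
    rw [← hS]
    congr 1
    trans ∑ x ∈ S, (1 / 2 : ℝ) * (s i * (x i : ℝ) * ((f x : ℝ) - (f (flipAt x i) : ℝ)))
    · refine Finset.sum_congr rfl fun x hx => ?_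
      convert key x hx i using 2
    have hflip : ∑ x ∈ S, s i * (x i : ℝ) * (f (flipAt x i) : ℝ)
        = ∑ x ∈ S, -(s i * (x i : ℝ) * (f x : ℝ)) := by
      rw [← sum_flip (V := Fin n) i (fun y => s i * (y i : ℝ) * (f (flipAt y i) : ℝ))]
      refine Finset.sum_congr rfl fun x _ => ?_
      show s i * ((flipAt x i i : ℤ) : ℝ) * (f (flipAt (flipAt x i) i) : ℝ) = _
      rw [flipAt_flipAt, flip_apply_self]
      push_cast
      ring
    have expand : ∑ x ∈ S, (1 / 2 : ℝ) * (s i * (x i : ℝ) * ((f x : ℝ) - (f (flipAt x i) : ℝ)))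
        = (1 / 2) * ((∑ x ∈ S, s i * (x i : ℝ) * (f x : ℝ))
            - ∑ x ∈ S, s i * (x i : ℝ) * (f (flipAt x i) : ℝ)) := by
      rw [← Finset.sum_sub_distrib, Finset.mul_sum]
      exact Finset.sum_congr rfl fun x _ => by ring
    rw [expand, hflip, Finset.sum_neg_distrib]
    ring
  -- orthogonality
  have orth : ∀ i j : Fin n, i ≠ j → ∑ x ∈ S, (x i : ℝ) * (x j : ℝ) = 0 := by
    intro i j hij
    have h := sum_flip (V := Fin n) i (fun y => (y i : ℝ) * (y j : ℝ))
    have h2 : ∑ x ∈ S, ((flipAt x i i : ℤ) : ℝ) * ((flipAt x i j : ℤ) : ℝ)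
        = ∑ x ∈ S, -((x i : ℝ) * (x j : ℝ)) := by
      refine Finset.sum_congr rfl fun x _ => ?_
      rw [flip_apply_self, flip_apply_ne x (Ne.symm hij)]
      push_cast; ring
    rw [h2, Finset.sum_neg_distrib] at h
    linarith
  have diag : ∀ i : Fin n, ∑ x ∈ S, (x i : ℝ) * (x i : ℝ) = S.card := by
    intro i
    rw [show (S.card : ℝ) = ∑ _x ∈ S, (1 : ℝ) by rw [Finset.sum_const]; simp]
    refine Finset.sum_congr rfl fun x hx => ?_
    rcases mem_cube.mp hx i with h | h <;> rw [h] <;> push_cast <;> ring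
  -- second moment of T
  have hs2 : ∀ i : Fin n, s i ^ 2 ≤ 1 := by
    intro i; simp only [hs]; split_ifs <;> norm_num
  have sumT2 : ∑ x ∈ S, (T x) ^ 2 ≤ (n : ℝ) * S.card := by
    have e1 : ∀ x : Fin n → ℤ, (T x) ^ 2
        = ∑ i : Fin n, ∑ j : Fin n, (s i * s j) * ((x i : ℝ) * (x j : ℝ)) := by
      intro x
      rw [hT, sq, Finset.sum_mul_sum]
      exact Finset.sum_congr rfl fun i _ => Finset.sum_congr rfl fun j _ => by ring
    calc ∑ x ∈ S, (T x) ^ 2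
        = ∑ i : Fin n, ∑ j : Fin n, (s i * s j) * ∑ x ∈ S, (x i : ℝ) * (x j : ℝ) := by
          rw [Finset.sum_congr rfl fun x _ => e1 x, Finset.sum_comm]
          refine Finset.sum_congr rfl fun i _ => ?_
          rw [Finset.sum_comm]
          exact Finset.sum_congr rfl fun j _ => (Finset.mul_sum _ _ _).symm
      _ = ∑ i : Fin n, s i ^ 2 * S.card := by
          refine Finset.sum_congr rfl fun i _ => ?_
          rw [Finset.sum_eq_single i]
          · rw [diag i]; ring
          · intro j _ hji
            rw [orth i j (Ne.symm hji), mul_zero]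
          · intro h; exact absurd (Finset.mem_univ i) h
      _ ≤ ∑ _i : Fin n, (1 : ℝ) * S.card := by
          refine Finset.sum_le_sum fun i _ => ?_
          exact mul_le_mul_of_nonneg_right (hs2 i) (le_of_lt cardS_pos)
      _ = (n : ℝ) * S.card := by
          rw [Finset.sum_const]; simp
  -- Cauchy–Schwarz
  have CS : (∑ x ∈ S, |T x|) ^ 2 ≤ (S.card : ℝ) * ∑ x ∈ S, (T x) ^ 2 := by
    have := Finset.sum_mul_sq_le_sq_mul_sq S (fun _ => (1 : ℝ)) (fun x => |T x|)
    simpa [Finset.sum_const, sq_abs] using this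
  have habsT : ∑ x ∈ S, |T x| ≤ Real.sqrt n * S.card := by
    have h1 : (∑ x ∈ S, |T x|) ^ 2 ≤ (n : ℝ) * (S.card : ℝ) ^ 2 := by
      calc (∑ x ∈ S, |T x|) ^ 2 ≤ (S.card : ℝ) * ∑ x ∈ S, (T x) ^ 2 := CS
        _ ≤ (S.card : ℝ) * ((n : ℝ) * S.card) :=
            mul_le_mul_of_nonneg_left sumT2 (le_of_lt cardS_pos)
        _ = (n : ℝ) * (S.card : ℝ) ^ 2 := by ring
    have h0 : (0 : ℝ) ≤ ∑ x ∈ S, |T x| := Finset.sum_nonneg fun x _ => abs_nonneg _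
    calc ∑ x ∈ S, |T x| = Real.sqrt ((∑ x ∈ S, |T x|) ^ 2) := (Real.sqrt_sq h0).symm
      _ ≤ Real.sqrt ((n : ℝ) * (S.card : ℝ) ^ 2) := Real.sqrt_le_sqrt h1
      _ = Real.sqrt n * S.card := by
          rw [Real.sqrt_mul (by positivity), Real.sqrt_sq (le_of_lt cardS_pos)]
  -- f is ±1 on the cube
  have hfpm : ∀ x ∈ S, (f x : ℝ) = 1 ∨ (f x : ℝ) = -1 := by
    intro x hx
    have hu : L x ≠ 0 := hnz x hx
    have hfx : f x = sgn (L x) := hf x hx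
    rcases hu.lt_or_gt with h | h
    · right; rw [hfx, sgn_of_neg h]; norm_num
    · left; rw [hfx, sgn_of_pos h]; norm_num
  -- assemble
  have htot : totalInf f = (∑ x ∈ S, (f x : ℝ) * T x) / S.card := by
    unfold totalInf
    rw [Finset.sum_congr rfl fun i _ => coord i, ← Finset.sum_div]
    congr 1
    rw [Finset.sum_comm]
    refine Finset.sum_congr rfl fun x _ => ?_
    rw [hT, Finset.mul_sum]
    exact Finset.sum_congr rfl fun i _ => by ring
  rw [htot, div_le_iff₀ cardS_pos]
  calc ∑ x ∈ S, (f x : ℝ) * T x ≤ ∑ x ∈ S, |T x| := by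
        refine Finset.sum_le_sum fun x hx => ?_
        rcases hfpm x hx with h | h <;> rw [h]
        · rw [one_mul]; exact le_abs_self _
        · rw [neg_one_mul]; exact neg_le_abs _
    _ ≤ Real.sqrt n * S.card := habsT
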